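/- Let σ : ℝ → M be almost-periodic with mean value σ̄. Then there exists a bounded decreasing function μ : ℝ₊ → ℝ₊ with μ(T) → 0 as T → ∞ such that for every ζ in the hull H(σ) and every s ∈ ℝ and T > 0, ‖(1/T) ∫_s^{s+T} (ζ(t) − σ̄) dt‖ ≤ μ(T). -/

import Mathlib

open Filter Topology BoundedContinuousFunction
open MeasureTheory

/-- The translate `σ(· + h)` of a bounded continuous function. -/
noncomputable def apTranslate {M : Type*} [NormedAddCommGroup M]
    (σ : ℝ →ᵇ M) (h : ℝ) : ℝ →ᵇ M :=
  σ.compContinuous ⟨fun t => t + h, by continuity⟩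

/-- Bochner's criterion: `σ` is almost-periodic iff the set of its translates is
precompact in `C_b(ℝ, M)`. -/
def AlmostPeriodic {M : Type*} [NormedAddCommGroup M] (σ : ℝ →ᵇ M) : Prop :=
  IsCompact (closure (Set.range (apTranslate σ)))

/-- The hull of `σ`: the closure in `C_b(ℝ, M)` of the set of translates of `σ`. -/
noncomputable def hull {M : Type*} [NormedAddCommGroup M] (σ : ℝ →ᵇ M) : Set (ℝ →ᵇ M) :=
  closure (Set.range (apTranslate σ))

section Aux

set_option linter.unusedSectionVars false
variable {M : Type*} [NormedAddCommGroup M] [NormedSpace ℝ M] [CompleteSpace M] (σ : ℝ →ᵇ M) (σbar : M)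

lemma apTranslate_apply (h t : ℝ) : apTranslate σ h t = σ (t + h) := rfl

lemma ap_intI_integrable (a b : ℝ) :
    IntervalIntegrable (fun t => σ t - σbar) volume a b :=
  (σ.continuous.sub continuous_const).intervalIntegrable a b

lemma ap_intI_bound (a b : ℝ) :
    ‖∫ t in a..b, (σ t - σbar)‖ ≤ (‖σ‖ + ‖σbar‖) * |b - a| :=
  intervalIntegral.norm_integral_le_of_norm_le_const fun x _ =>
    (norm_sub_le _ _).trans (add_le_add (σ.norm_coe_le_norm x) le_rfl)

/-- averaged quantity -/
noncomputable def apAvg (s T : ℝ) : ℝ := ‖(1 / T) • ∫ t in s..(s + T), (σ t - σbar)‖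

lemma apAvg_nonneg (s T : ℝ) : 0 ≤ apAvg σ σbar s T := norm_nonneg _

lemma apAvg_le (s T : ℝ) : apAvg σ σbar s T ≤ ‖σ‖ + ‖σbar‖ := by
  have hb := ap_intI_bound σ σbar s (s + T)
  rw [apAvg, norm_smul]
  have h1 : (s + T - s) = T := by ring
  rw [h1] at hb
  rcases eq_or_ne T 0 with h | h
  · simp [h]
    positivity
  · calc |1 / T| * ‖∫ t in s..(s + T), (σ t - σbar)‖
        ≤ |1 / T| * ((‖σ‖ + ‖σbar‖) * |T|) := by
          exact mul_le_mul_of_nonneg_left hb (abs_nonneg _)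
      _ = ‖σ‖ + ‖σbar‖ := by
          rw [abs_div, abs_one]
          field_simp

/-- Shift estimate from almost periodicity. -/
lemma ap_shift_bound (hσ : AlmostPeriodic σ) {ε : ℝ} (hε : 0 < ε) :
    ∃ L : ℝ, 0 ≤ L ∧ ∀ s T : ℝ, 0 < T →
      ‖(∫ t in s..(s + T), (σ t - σbar)) - ∫ t in (0:ℝ)..T, (σ t - σbar)‖
        ≤ ε * T + 2 * (‖σ‖ + ‖σbar‖) * L := by
  classical
  have htb : TotallyBounded (Set.range (apTranslate σ)) :=
    hσ.totallyBounded.subset subset_closure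
  obtain ⟨t, hts, htfin, hcov⟩ :=
    totallyBounded_iff_subset.mp htb _ (Metric.dist_mem_uniformity hε)
  have hex : ∀ y ∈ t, ∃ h : ℝ, apTranslate σ h = y := fun y hy => hts hy
  choose! g hg using hex
  obtain ⟨L0, hL0⟩ := (htfin.image fun y => |g y|).bddAbove
  refine ⟨max L0 0, le_max_right _ _, ?_⟩
  intro s T hT
  have hmem : apTranslate σ s ∈ ⋃ y ∈ t, {x | (x, y) ∈ {p : (ℝ →ᵇ M) × (ℝ →ᵇ M) | dist p.1 p.2 < ε}} :=
    hcov (Set.mem_range_self s)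
  simp only [Set.mem_iUnion, Set.mem_setOf_eq] at hmem
  obtain ⟨y, hyt, hdist⟩ := hmem
  set h' : ℝ := g y with hh'
  have hgy : apTranslate σ h' = y := hg y hyt
  have hLh' : |h'| ≤ max L0 0 :=
    le_trans (hL0 (Set.mem_image_of_mem _ hyt)) (le_max_left _ _)
  have hpt : ∀ u : ℝ, ‖σ (u + s) - σ (u + h')‖ ≤ ε := by
    intro u
    have h1 : ‖σ (u + s) - σ (u + h')‖ = dist (apTranslate σ s u) (apTranslate σ h' u) := by
      rw [apTranslate_apply, apTranslate_apply, dist_eq_norm]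
    rw [h1]
    calc dist (apTranslate σ s u) (apTranslate σ h' u)
        ≤ dist (apTranslate σ s) (apTranslate σ h') := dist_coe_le_dist u
      _ = dist (apTranslate σ s) y := by rw [hgy]
      _ ≤ ε := le_of_lt hdist
  set C : ℝ := ‖σ‖ + ‖σbar‖ with hC
  have hC0 : 0 ≤ C := by positivity
  -- X = ∫_s^{s+T} = ∫_0^T (σ(t+s)-σbar)
  have a1 : (∫ t in (0:ℝ)..T, (σ (t + s) - σbar)) = ∫ t in s..(s + T), (σ t - σbar) := by
    rw [intervalIntegral.integral_comp_add_right (fun u => σ u - σbar) s, zero_add, add_comm T s]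
  have a2 : (∫ t in (0:ℝ)..T, (σ (t + h') - σbar)) = ∫ t in h'..(T + h'), (σ t - σbar) := by
    rw [intervalIntegral.integral_comp_add_right (fun u => σ u - σbar) h', zero_add]
  have d1 : ‖(∫ t in (0:ℝ)..T, (σ (t + s) - σbar)) - ∫ t in (0:ℝ)..T, (σ (t + h') - σbar)‖
      ≤ ε * T := by
    have i1 : IntervalIntegrable (fun u => σ (u + s) - σbar) volume 0 T :=
      ((σ.continuous.comp (continuous_id.add continuous_const)).sub continuous_const).intervalIntegrable _ _
    have i2 : IntervalIntegrable (fun u => σ (u + h') - σbar) volume 0 T :=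
      ((σ.continuous.comp (continuous_id.add continuous_const)).sub continuous_const).intervalIntegrable _ _
    rw [← intervalIntegral.integral_sub i1 i2]
    have hb : ∀ x ∈ Set.uIoc (0:ℝ) T, ‖(σ (x + s) - σbar) - (σ (x + h') - σbar)‖ ≤ ε := by
      intro x _
      rw [sub_sub_sub_cancel_right]
      exact hpt x
    calc ‖∫ x in (0:ℝ)..T, ((σ (x + s) - σbar) - (σ (x + h') - σbar))‖
        ≤ ε * |T - 0| := intervalIntegral.norm_integral_le_of_norm_le_const hb
      _ = ε * T := by rw [sub_zero, abs_of_pos hT]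
  have add1 : (∫ t in h'..(0:ℝ), (σ t - σbar)) + ∫ t in (0:ℝ)..T, (σ t - σbar)
      = ∫ t in h'..T, (σ t - σbar) :=
    intervalIntegral.integral_add_adjacent_intervals (ap_intI_integrable σ σbar _ _)
      (ap_intI_integrable σ σbar _ _)
  have add2 : (∫ t in h'..T, (σ t - σbar)) + ∫ t in T..(T + h'), (σ t - σbar)
      = ∫ t in h'..(T + h'), (σ t - σbar) :=
    intervalIntegral.integral_add_adjacent_intervals (ap_intI_integrable σ σbar _ _)
      (ap_intI_integrable σ σbar _ _)
  have d2 : ‖(∫ t in h'..(T + h'), (σ t - σbar)) - ∫ t in (0:ℝ)..T, (σ t - σbar)‖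
      ≤ 2 * C * max L0 0 := by
    have e : (∫ t in h'..(T + h'), (σ t - σbar)) - ∫ t in (0:ℝ)..T, (σ t - σbar)
        = (∫ t in h'..(0:ℝ), (σ t - σbar)) + ∫ t in T..(T + h'), (σ t - σbar) := by
      rw [← add2, ← add1]; abel
    rw [e]
    have b1 := ap_intI_bound σ σbar h' 0
    have b2 := ap_intI_bound σ σbar T (T + h')
    rw [zero_sub, abs_neg] at b1
    have h2 : T + h' - T = h' := by ring
    rw [h2] at b2
    have hb1 : ‖∫ t in h'..(0:ℝ), (σ t - σbar)‖ ≤ C * max L0 0 :=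
      b1.trans (mul_le_mul_of_nonneg_left hLh' hC0)
    have hb2 : ‖∫ t in T..(T + h'), (σ t - σbar)‖ ≤ C * max L0 0 :=
      b2.trans (mul_le_mul_of_nonneg_left hLh' hC0)
    calc ‖(∫ t in h'..(0:ℝ), (σ t - σbar)) + ∫ t in T..(T + h'), (σ t - σbar)‖
        ≤ ‖∫ t in h'..(0:ℝ), (σ t - σbar)‖ + ‖∫ t in T..(T + h'), (σ t - σbar)‖ := norm_add_le _ _
      _ ≤ 2 * C * max L0 0 := by linarith
  calc ‖(∫ t in s..(s + T), (σ t - σbar)) - ∫ t in (0:ℝ)..T, (σ t - σbar)‖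
      ≤ ‖(∫ t in s..(s + T), (σ t - σbar)) - ∫ t in (0:ℝ)..T, (σ (t + h') - σbar)‖
        + ‖(∫ t in (0:ℝ)..T, (σ (t + h') - σbar)) - ∫ t in (0:ℝ)..T, (σ t - σbar)‖ := by
          have := dist_triangle (∫ t in s..(s + T), (σ t - σbar))
            (∫ t in (0:ℝ)..T, (σ (t + h') - σbar)) (∫ t in (0:ℝ)..T, (σ t - σbar))
          simpa [dist_eq_norm] using this
    _ ≤ ε * T + 2 * C * max L0 0 := by
        rw [← a1]
        have d2' : ‖(∫ t in (0:ℝ)..T, (σ (t + h') - σbar)) - ∫ t in (0:ℝ)..T, (σ t - σbar)‖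
            ≤ 2 * C * max L0 0 := by rw [a2]; exact d2
        linarith
lemma ap_core (hσ : AlmostPeriodic σ)
    (hmean : Tendsto (fun T : ℝ => (1 / (2 * T)) • ∫ t in (-T)..T, σ t) atTop (𝓝 σbar))
    {ε : ℝ} (hε : 0 < ε) :
    ∃ T0 : ℝ, 0 < T0 ∧ ∀ T, T0 ≤ T → ∀ s : ℝ, apAvg σ σbar s T ≤ ε := by
  set C : ℝ := ‖σ‖ + ‖σbar‖ with hC
  have hC0 : 0 ≤ C := by positivity
  obtain ⟨L, hL0, hL⟩ := ap_shift_bound σ σbar hσ (show (0:ℝ) < ε / 6 by linarith)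
  obtain ⟨T1, hT1⟩ := Metric.tendsto_atTop.mp hmean (ε / 4) (by linarith)
  refine ⟨max T1 (max 1 (12 * C * L / ε)), ?_, ?_⟩
  · exact lt_of_lt_of_le one_pos ((le_max_left _ _).trans (le_max_right _ _))
  intro T hTge s
  have hT : 0 < T :=
    lt_of_lt_of_le one_pos (((le_max_left _ _).trans (le_max_right _ _)).trans hTge)
  have hT1le : T1 ≤ T := (le_max_left _ _).trans hTge
  have hTdiv : 12 * C * L / ε ≤ T := ((le_max_right _ _).trans (le_max_right _ _)).trans hTge
  have h12 : 12 * C * L ≤ T * ε := (div_le_iff₀ hε).mp hTdiv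
  -- symmetric average estimate
  have hsym0 : (∫ t in (-T)..T, (σ t - σbar)) = (∫ t in (-T)..T, σ t) - (2 * T) • σbar := by
    rw [intervalIntegral.integral_sub (σ.continuous.intervalIntegrable _ _)
      intervalIntegrable_const, intervalIntegral.integral_const, sub_neg_eq_add, two_mul]
  have h2T : (2 * T) ≠ 0 := by positivity
  have hsmul : (1 / (2 * T)) • (∫ t in (-T)..T, (σ t - σbar))
      = (1 / (2 * T)) • (∫ t in (-T)..T, σ t) - σbar := by
    rw [hsym0, smul_sub, smul_smul]
    congr 1
    rw [one_div_mul_cancel h2T, one_smul]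
  have hsymbound : ‖(1 / (2 * T)) • (∫ t in (-T)..T, (σ t - σbar))‖ ≤ ε / 4 := by
    rw [hsmul, ← dist_eq_norm]
    exact le_of_lt (hT1 T hT1le)
  have hsymnorm : ‖∫ t in (-T)..T, (σ t - σbar)‖ ≤ (ε / 4) * (2 * T) := by
    have h1 : ‖(1 / (2 * T)) • (∫ t in (-T)..T, (σ t - σbar))‖
        = (1 / (2 * T)) * ‖∫ t in (-T)..T, (σ t - σbar)‖ := by
      rw [norm_smul, Real.norm_eq_abs, abs_of_pos (by positivity)]
    rw [h1] at hsymbound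
    have h2 : (0:ℝ) < 1 / (2 * T) := by positivity
    calc ‖∫ t in (-T)..T, (σ t - σbar)‖
        = (2 * T) * ((1 / (2 * T)) * ‖∫ t in (-T)..T, (σ t - σbar)‖) := by
          field_simp
      _ ≤ (2 * T) * (ε / 4) := by
          apply mul_le_mul_of_nonneg_left hsymbound (by positivity)
      _ = (ε / 4) * (2 * T) := by ring
  -- I(-T,0) vs I(0,T)
  have hadj : (∫ t in (-T)..(0:ℝ), (σ t - σbar)) + ∫ t in (0:ℝ)..T, (σ t - σbar)
      = ∫ t in (-T)..T, (σ t - σbar) :=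
    intervalIntegral.integral_add_adjacent_intervals (ap_intI_integrable σ σbar _ _)
      (ap_intI_integrable σ σbar _ _)
  have hA : ‖(∫ t in (-T)..(0:ℝ), (σ t - σbar)) - ∫ t in (0:ℝ)..T, (σ t - σbar)‖
      ≤ ε / 6 * T + 2 * C * L := by
    have := hL (-T) T hT
    rw [show -T + T = (0:ℝ) by ring] at this
    exact this
  have hZ : ‖∫ t in (0:ℝ)..T, (σ t - σbar)‖
      ≤ (ε / 4) * T + (1 / 2) * (ε / 6 * T + 2 * C * L) := by
    have key : (∫ t in (0:ℝ)..T, (σ t - σbar))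
        = (1 / 2 : ℝ) • ((∫ t in (-T)..(0:ℝ), (σ t - σbar)) + ∫ t in (0:ℝ)..T, (σ t - σbar))
          + (1 / 2 : ℝ) • ((∫ t in (0:ℝ)..T, (σ t - σbar)) - ∫ t in (-T)..(0:ℝ), (σ t - σbar)) := by
      module
    rw [key, hadj]
    calc ‖(1 / 2 : ℝ) • (∫ t in (-T)..T, (σ t - σbar))
          + (1 / 2 : ℝ) • ((∫ t in (0:ℝ)..T, (σ t - σbar)) - ∫ t in (-T)..(0:ℝ), (σ t - σbar))‖
        ≤ ‖(1 / 2 : ℝ) • (∫ t in (-T)..T, (σ t - σbar))‖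
          + ‖(1 / 2 : ℝ) • ((∫ t in (0:ℝ)..T, (σ t - σbar)) - ∫ t in (-T)..(0:ℝ), (σ t - σbar))‖ :=
          norm_add_le _ _
      _ ≤ (ε / 4) * T + (1 / 2) * (ε / 6 * T + 2 * C * L) := by
          have e1 : ‖(1 / 2 : ℝ) • (∫ t in (-T)..T, (σ t - σbar))‖
              = (1 / 2) * ‖∫ t in (-T)..T, (σ t - σbar)‖ := by
            rw [norm_smul, Real.norm_eq_abs, abs_of_pos]; norm_num
          have e2 : ‖(1 / 2 : ℝ) • ((∫ t in (0:ℝ)..T, (σ t - σbar)) - ∫ t in (-T)..(0:ℝ), (σ t - σbar))‖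
              = (1 / 2) * ‖(∫ t in (0:ℝ)..T, (σ t - σbar)) - ∫ t in (-T)..(0:ℝ), (σ t - σbar)‖ := by
            rw [norm_smul, Real.norm_eq_abs, abs_of_pos]; norm_num
          rw [e1, e2, norm_sub_rev]
          nlinarith [hsymnorm, hA]
  -- final
  have hX : ‖∫ t in s..(s + T), (σ t - σbar)‖ ≤ ε * T := by
    have h1 := hL s T hT
    have h2 : ‖∫ t in s..(s + T), (σ t - σbar)‖
        ≤ ‖(∫ t in s..(s + T), (σ t - σbar)) - ∫ t in (0:ℝ)..T, (σ t - σbar)‖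
          + ‖∫ t in (0:ℝ)..T, (σ t - σbar)‖ := by
      have := norm_add_le ((∫ t in s..(s + T), (σ t - σbar)) - ∫ t in (0:ℝ)..T, (σ t - σbar))
        (∫ t in (0:ℝ)..T, (σ t - σbar))
      simpa using this
    have hCL : 0 ≤ C * L := mul_nonneg hC0 hL0
    nlinarith [h1, hZ, h2]
  rw [apAvg, norm_smul, Real.norm_eq_abs, abs_of_pos (by positivity : (0:ℝ) < 1 / T)]
  calc (1 / T) * ‖∫ t in s..(s + T), (σ t - σbar)‖
      ≤ (1 / T) * (ε * T) := by
        apply mul_le_mul_of_nonneg_left hX (by positivity)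
    _ = ε := by field_simp

end Aux

/-- Uniform estimate for averages over the hull: there is a bounded decreasing
function `μ` with `μ(T) → 0` such that `‖(1/T)∫_s^{s+T}(ζ(t) − σ̄) dt‖ ≤ μ(T)`
for all `ζ` in the hull, all `s ∈ ℝ` and all `T > 0`. -/
theorem uniform_mean_estimate {M : Type*} [NormedAddCommGroup M] [NormedSpace ℝ M]
    [CompleteSpace M] (σ : ℝ →ᵇ M) (hσ : AlmostPeriodic σ) (σbar : M)
    (hmean : Tendsto (fun T : ℝ => (1 / (2 * T)) • ∫ t in (-T)..T, σ t) atTop (𝓝 σbar)) :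
    ∃ μ : ℝ → ℝ, (∀ T > 0, 0 ≤ μ T) ∧ (∃ C, ∀ T > 0, μ T ≤ C) ∧
      AntitoneOn μ (Set.Ioi 0) ∧ Tendsto μ atTop (𝓝 0) ∧
      ∀ ζ ∈ hull σ, ∀ s : ℝ, ∀ T > 0,
        ‖(1 / T) • ∫ t in s..(s + T), (ζ t - σbar)‖ ≤ μ T := by
  classical
  set C : ℝ := ‖σ‖ + ‖σbar‖ with hC
  set S : ℝ → Set ℝ := fun T => {r | ∃ s T', T ≤ T' ∧ r = apAvg σ σbar s T'} with hS
  have hSne : ∀ T, (S T).Nonempty := fun T => ⟨apAvg σ σbar 0 T, 0, T, le_refl _, rfl⟩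
  have hSbdd : ∀ T, BddAbove (S T) := by
    intro T
    refine ⟨C, ?_⟩
    rintro r ⟨s, T', _, rfl⟩
    exact apAvg_le σ σbar s T'
  set μ : ℝ → ℝ := fun T => sSup (S T) with hμ
  have hmono : Antitone μ := by
    intro T1 T2 h12
    apply csSup_le_csSup (hSbdd T1) (hSne T2)
    rintro r ⟨s, T', hle, rfl⟩
    exact ⟨s, T', le_trans h12 hle, rfl⟩
  have hqle : ∀ s T, apAvg σ σbar s T ≤ μ T := fun s T =>
    le_csSup (hSbdd T) ⟨s, T, le_refl _, rfl⟩
  have hnonneg : ∀ T, 0 ≤ μ T := fun T =>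
    le_trans (apAvg_nonneg σ σbar 0 T) (hqle 0 T)
  have hbound : ∀ T, μ T ≤ C := by
    intro T
    apply csSup_le (hSne T)
    rintro r ⟨s, T', _, rfl⟩
    exact apAvg_le σ σbar s T'
  have htend : Tendsto μ atTop (𝓝 0) := by
    rw [Metric.tendsto_atTop]
    intro ε hε
    obtain ⟨T0, hT0pos, hT0⟩ := ap_core σ σbar hσ hmean (half_pos hε)
    refine ⟨T0, fun T hT => ?_⟩
    have hμT : μ T ≤ ε / 2 := by
      refine le_trans (hmono hT) (csSup_le (hSne T0) ?_)
      rintro r ⟨s, T', hle, rfl⟩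
      exact hT0 T' hle s
    rw [Real.dist_eq, sub_zero, abs_of_nonneg (hnonneg T)]
    linarith
  refine ⟨μ, fun T _ => hnonneg T, ⟨C, fun T _ => hbound T⟩, hmono.antitoneOn _, htend, ?_⟩
  intro ζ hζ s T hT
  refine le_of_forall_pos_le_add ?_
  intro δ hδ
  have hζ' : ζ ∈ closure (Set.range (apTranslate σ)) := hζ
  obtain ⟨x, hx, hdx⟩ := Metric.mem_closure_iff.mp hζ' δ hδ
  obtain ⟨h, rfl⟩ := hx
  have hpt : ∀ u : ℝ, ‖ζ u - σ (u + h)‖ ≤ δ := by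
    intro u
    have h1 : ‖ζ u - σ (u + h)‖ = dist (ζ u) (apTranslate σ h u) := by
      rw [apTranslate_apply, dist_eq_norm]
    rw [h1]
    exact le_trans (dist_coe_le_dist u) (le_of_lt hdx)
  have iζ : IntervalIntegrable (fun t => ζ t - σbar) volume s (s + T) :=
    (ζ.continuous.sub continuous_const).intervalIntegrable _ _
  have iτ : IntervalIntegrable (fun t => σ (t + h) - σbar) volume s (s + T) :=
    ((σ.continuous.comp (continuous_id.add continuous_const)).sub continuous_const).intervalIntegrable _ _
  have hdiff : ‖(∫ t in s..(s + T), (ζ t - σbar)) - ∫ t in s..(s + T), (σ (t + h) - σbar)‖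
      ≤ δ * T := by
    rw [← intervalIntegral.integral_sub iζ iτ]
    have hb : ∀ x ∈ Set.uIoc s (s + T), ‖(ζ x - σbar) - (σ (x + h) - σbar)‖ ≤ δ := by
      intro x _
      rw [sub_sub_sub_cancel_right]
      exact hpt x
    calc ‖∫ x in s..(s + T), ((ζ x - σbar) - (σ (x + h) - σbar))‖
        ≤ δ * |s + T - s| := intervalIntegral.norm_integral_le_of_norm_le_const hb
      _ = δ * T := by rw [show s + T - s = T by ring, abs_of_pos hT]
  have htrans : (∫ t in s..(s + T), (σ (t + h) - σbar)) = ∫ t in (s + h)..(s + h + T), (σ t - σbar) := by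
    rw [intervalIntegral.integral_comp_add_right (fun u => σ u - σbar) h,
      show s + T + h = s + h + T by ring]
  have hsmall : ‖(1 / T) • ((∫ t in s..(s + T), (ζ t - σbar))
      - ∫ t in s..(s + T), (σ (t + h) - σbar))‖ ≤ δ := by
    rw [norm_smul, Real.norm_eq_abs, abs_of_pos (by positivity : (0:ℝ) < 1 / T)]
    calc (1 / T) * ‖(∫ t in s..(s + T), (ζ t - σbar)) - ∫ t in s..(s + T), (σ (t + h) - σbar)‖
        ≤ (1 / T) * (δ * T) := mul_le_mul_of_nonneg_left hdiff (by positivity)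
      _ = δ := by field_simp
  have hmid : ‖(1 / T) • ∫ t in s..(s + T), (σ (t + h) - σbar)‖ = apAvg σ σbar (s + h) T := by
    rw [apAvg, htrans]
  calc ‖(1 / T) • ∫ t in s..(s + T), (ζ t - σbar)‖
      ≤ ‖(1 / T) • ∫ t in s..(s + T), (σ (t + h) - σbar)‖
        + ‖(1 / T) • ((∫ t in s..(s + T), (ζ t - σbar))
            - ∫ t in s..(s + T), (σ (t + h) - σbar))‖ := by
        have e : (1 / T) • (∫ t in s..(s + T), (ζ t - σbar))
            = (1 / T) • (∫ t in s..(s + T), (σ (t + h) - σbar))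
              + (1 / T) • ((∫ t in s..(s + T), (ζ t - σbar))
                  - ∫ t in s..(s + T), (σ (t + h) - σbar)) := by
          rw [← smul_add]
          congr 1
          abel
        nth_rewrite 1 [e]
        exact norm_add_le _ _
    _ ≤ μ T + δ := by
        rw [hmid]
        have := hqle (s + h) T
        linarith
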